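/- The function H is a first integral of system (Z) on the open unit square: for every (u,v) ∈ (0,1)² one has ∂_u H(u,v) · u(1−u)(σv−χ) + ∂_v H(u,v) · (−v(1−v)(ξu−φ)) = 0; consequently, for every differentiable curve t ↦ (u(t), v(t)) with values in (0,1)² that solves (Z) on an interval I, the function t ↦ H(u(t), v(t)) is constant on I. -/

import Mathlib

open Set

noncomputable section

/-- The first integral `H(u,v) = -φ log u + (φ-ξ) log(1-u) - χ log v + (χ-σ) log(1-v)`. -/
def Hfun (σ χ ξ φ : ℝ) (u v : ℝ) : ℝ :=
  -φ * Real.log u + (φ - ξ) * Real.log (1 - u)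
  - χ * Real.log v + (χ - σ) * Real.log (1 - v)

lemma Hcomp_hasDerivAt (σ χ ξ φ : ℝ) {u v : ℝ → ℝ} {u' v' t : ℝ}
    (hu : HasDerivAt u u' t) (hv : HasDerivAt v v' t)
    (hu0 : u t ≠ 0) (hu1 : 1 - u t ≠ 0) (hv0 : v t ≠ 0) (hv1 : 1 - v t ≠ 0) :
    HasDerivAt (fun s => Hfun σ χ ξ φ (u s) (v s))
      (-φ * (u' / u t) + (φ - ξ) * ((-1 * u') / (1 - u t))
        - χ * (v' / v t) + (χ - σ) * ((-1 * v') / (1 - v t))) t := by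
  have h1 : HasDerivAt (fun s => Real.log (u s)) (u' / u t) t := hu.log hu0
  have h2 : HasDerivAt (fun s => Real.log (1 - u s)) ((-1 * u') / (1 - u t)) t := by
    have : HasDerivAt (fun s => 1 - u s) (-1 * u') t := by
      exact ((hasDerivAt_const t (1:ℝ)).sub hu).congr_deriv (by ring)
    exact this.log hu1
  have h3 : HasDerivAt (fun s => Real.log (v s)) (v' / v t) t := hv.log hv0
  have h4 : HasDerivAt (fun s => Real.log (1 - v s)) ((-1 * v') / (1 - v t)) t := by
    have : HasDerivAt (fun s => 1 - v s) (-1 * v') t := by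
      exact ((hasDerivAt_const t (1:ℝ)).sub hv).congr_deriv (by ring)
    exact this.log hv1
  exact (((h1.const_mul (-φ)).add (h2.const_mul (φ - ξ))).sub
    (h3.const_mul χ)).add (h4.const_mul (χ - σ))

/-- `H` is a first integral of system (Z) on the open unit square: the gradient of `H` is
orthogonal to the vector field, and `H` is constant along every solution of (Z) with values in
`(0,1)²` defined on an interval. -/
theorem statement5 (σ χ ξ φ : ℝ) (hχ : 0 < χ) (hχσ : χ < σ) (hφ : 0 < φ) (hφξ : φ < ξ) :
    (∀ u v : ℝ, u ∈ Ioo (0:ℝ) 1 → v ∈ Ioo (0:ℝ) 1 →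
      deriv (fun u' => Hfun σ χ ξ φ u' v) u * (u * (1 - u) * (σ * v - χ))
        + deriv (fun v' => Hfun σ χ ξ φ u v') v * (-(v * (1 - v) * (ξ * u - φ))) = 0) ∧
    (∀ I : Set ℝ, I.OrdConnected → ∀ u v : ℝ → ℝ,
      (∀ t ∈ I, u t ∈ Ioo (0:ℝ) 1 ∧ v t ∈ Ioo (0:ℝ) 1) →
      (∀ t ∈ I, HasDerivAt u (u t * (1 - u t) * (σ * v t - χ)) t ∧
                HasDerivAt v (-(v t * (1 - v t) * (ξ * u t - φ))) t) →
      ∀ s ∈ I, ∀ t ∈ I, Hfun σ χ ξ φ (u s) (v s) = Hfun σ χ ξ φ (u t) (v t)) := by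
  constructor
  · intro u v hu hv
    have hu0 : u ≠ 0 := ne_of_gt hu.1
    have hu1 : (1 : ℝ) - u ≠ 0 := sub_ne_zero.mpr (ne_of_gt hu.2)
    have hv0 : v ≠ 0 := ne_of_gt hv.1
    have hv1 : (1 : ℝ) - v ≠ 0 := sub_ne_zero.mpr (ne_of_gt hv.2)
    have hdu : HasDerivAt (fun u' => Hfun σ χ ξ φ u' v)
        (-φ * ((1:ℝ) / u) + (φ - ξ) * ((-1 * 1) / (1 - u))
          - χ * ((0:ℝ) / v) + (χ - σ) * ((-1 * 0) / (1 - v))) u :=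
      Hcomp_hasDerivAt σ χ ξ φ (hasDerivAt_id u) (hasDerivAt_const u v) hu0 hu1 hv0 hv1
    have hdv : HasDerivAt (fun v' => Hfun σ χ ξ φ u v')
        (-φ * ((0:ℝ) / u) + (φ - ξ) * ((-1 * 0) / (1 - u))
          - χ * ((1:ℝ) / v) + (χ - σ) * ((-1 * 1) / (1 - v))) v :=
      Hcomp_hasDerivAt σ χ ξ φ (hasDerivAt_const v u) (hasDerivAt_id v) hu0 hu1 hv0 hv1
    rw [hdu.deriv, hdv.deriv]
    field_simp
    ring
  · intro I hI u v hmem hode s hs t ht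
    set F := fun r => Hfun σ χ ξ φ (u r) (v r) with hF
    have hF' : ∀ r ∈ I, HasDerivAt F 0 r := by
      intro r hr
      obtain ⟨hu, hv⟩ := hmem r hr
      obtain ⟨hdu, hdv⟩ := hode r hr
      have hu0 : u r ≠ 0 := ne_of_gt hu.1
      have hu1 : (1 : ℝ) - u r ≠ 0 := sub_ne_zero.mpr (ne_of_gt hu.2)
      have hv0 : v r ≠ 0 := ne_of_gt hv.1
      have hv1 : (1 : ℝ) - v r ≠ 0 := sub_ne_zero.mpr (ne_of_gt hv.2)
      have h := Hcomp_hasDerivAt σ χ ξ φ hdu hdv hu0 hu1 hv0 hv1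
      convert h using 1
      field_simp
      ring
    have hconv : Convex ℝ I := hI.convex
    have key : ‖F t - F s‖ ≤ 0 * ‖t - s‖ := by
      refine hconv.norm_image_sub_le_of_norm_hasDerivWithin_le
        (f' := fun _ => (0:ℝ)) (fun r hr => (hF' r hr).hasDerivWithinAt)
        (fun r _ => by simp) hs ht
    have : F t = F s := by
      have := key
      rw [zero_mul] at this
      have := norm_le_zero_iff.mp this
      linarith [sub_eq_zero.mp this]
    exact this.symm
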